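/- Let M ≥ 1, let S_1,…,S_M and A_1,…,A_M be finite nonempty sets, S := S_1×⋯×S_M, A := A_1×⋯×A_M, and for T ⊆ {1,…,M} write s[T] := (s_j)_{j∈T} and S[T] := Π_{j∈T} S_j. Let d, n ≥ 1, λ > 0, B > 0. For each j ∈ {1,…,M} let Z_j ⊆ {1,…,M}, let φ_j : S[Z_j]×A_j → ℝ^d with ‖φ_j(·)‖₂ ≤ 1, and let w_j : S_j → ℝ^d be such that P_j(s′_j | s[Z_j], a_j) := ⟨φ_j(s[Z_j],a_j), w_j(s′_j)⟩ is a probability distribution over s′_j ∈ S_j for every (s[Z_j],a_j). Define the factored transition P(s′|s,a) := Π_{j=1}^M P_j(s′_j | s[Z_j], a_j). Fix a player i and assume that for every G : S[Z_i] → [0,1] one has ‖ Σ_{z∈S[Z_i]} (⊗_{j∈Z_i} w_j(z_j))·G(z) ‖₂ ≤ √(d^{|Z_i|}), where ⊗ denotes the Kronecker product taken over j ∈ Z_i in a fixed order. Define φ̄_i(s,a) := ⊗_{j∈Z_i} φ_j(s[Z_j], a_j) ∈ ℝ^{d^{|Z_i|}}. Let μ be a distribution on S×A, set Σ̄ :=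 n·Σ_{(s,a)} μ(s,a)·φ̄_i(s,a)φ̄_i(s,a)ᵀ + λ·I_{d^{|Z_i|}}, and define ν on S×A by ν(s,a) := (1/|A|)·Σ_{(s̃,ã)} μ(s̃,ã)·P(s|s̃,ã). Let q′ be any distribution on S×A, π : S → Δ(A) a policy, and q(s,a) := Σ_{(s̃,ã)} q′(s̃,ã)·P(s|s̃,ã)·π(a|s). Then for every g : S[Z_i]×A_i → [0,B]: E_{(s,a)∼q}[ g(s[Z_i], a_i) ] ≤ |A_i| · E_{(s̃,ã)∼q′}[ ‖φ̄_i(s̃,ã)‖_{Σ̄^{-1}} ] · √( n·E_{(s,a)∼ν}[ g(s[Z_i],a_i)² ] + B²·λ·d^{|Z_i|} ). -/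

import Mathlib

open Finset Matrix

/-- Euclidean (ℓ²) norm of a finite-dimensional real vector. -/
noncomputable def l2norm {ι : Type*} [Fintype ι] (x : ι → ℝ) : ℝ :=
  Real.sqrt (∑ i, x i ^ 2)

/-- Matrix-weighted norm ‖x‖_M = √(xᵀ M x). -/
noncomputable def matNorm {ι : Type*} [Fintype ι] (M : Matrix ι ι ℝ) (x : ι → ℝ) : ℝ :=
  Real.sqrt (x ⬝ᵥ M.mulVec x)

lemma sum_prod_pi {κ : Type*} [Fintype κ] [DecidableEq κ] (σ : κ → Type*) [∀ j, Fintype (σ j)]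
    (f : (j : κ) → σ j → ℝ) :
    ∑ y : (j : κ) → σ j, ∏ j, f j (y j) = ∏ j, ∑ x, f j x := by
  rw [Finset.prod_univ_sum]
  rw [Fintype.piFinset_univ]

lemma psd_quad_nonneg {ι : Type*} [Fintype ι] {Q : Matrix ι ι ℝ} (hQ : Q.PosSemidef)
    (x : ι → ℝ) : 0 ≤ x ⬝ᵥ Q.mulVec x := by
  simpa using hQ.dotProduct_mulVec_nonneg x

lemma herm_dot_symm {ι : Type*} [Fintype ι] {Q : Matrix ι ι ℝ} (hQ : Q.IsHermitian)
    (a b : ι → ℝ) : a ⬝ᵥ Q.mulVec b = b ⬝ᵥ Q.mulVec a := by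
  have hQij : ∀ i j, Q i j = Q j i := by
    intro i j
    conv_lhs => rw [← hQ]
    simp [Matrix.conjTranspose_apply]
  simp only [dotProduct, mulVec, Finset.mul_sum]
  rw [Finset.sum_comm]
  refine Finset.sum_congr rfl fun j _ => Finset.sum_congr rfl fun i _ => ?_
  rw [hQij i j]; ring

lemma psd_cs {ι : Type*} [Fintype ι] {Q : Matrix ι ι ℝ} (hQ : Q.PosSemidef) (u v : ι → ℝ) :
    (u ⬝ᵥ Q.mulVec v) ^ 2 ≤ (u ⬝ᵥ Q.mulVec u) * (v ⬝ᵥ Q.mulVec v) := by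
  have key : ∀ t : ℝ, 0 ≤ (v ⬝ᵥ Q.mulVec v) * (t * t) + (2 * (u ⬝ᵥ Q.mulVec v)) * t
      + (u ⬝ᵥ Q.mulVec u) := by
    intro t
    have h0 := psd_quad_nonneg hQ (u + t • v)
    have e : (u + t • v) ⬝ᵥ Q.mulVec (u + t • v)
        = (v ⬝ᵥ Q.mulVec v) * (t * t) + (2 * (u ⬝ᵥ Q.mulVec v)) * t + (u ⬝ᵥ Q.mulVec u) := by
      rw [Matrix.mulVec_add, Matrix.mulVec_smul]
      simp only [dotProduct_add, add_dotProduct, dotProduct_smul, smul_dotProduct,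
        smul_eq_mul]
      rw [herm_dot_symm hQ.1 v u]
      ring
    linarith [e ▸ h0]
  have hdisc := discrim_le_zero key
  rw [discrim] at hdisc
  nlinarith [hdisc]

lemma matNorm_cs {ι : Type*} [Fintype ι] [DecidableEq ι] {Q : Matrix ι ι ℝ} (hQ : Q.PosDef)
    (x y : ι → ℝ) : x ⬝ᵥ y ≤ matNorm Q⁻¹ x * matNorm Q y := by
  set u := Q⁻¹.mulVec x with hu'
  have hu : Q.mulVec u = x := by
    rw [hu', Matrix.mulVec_mulVec, Matrix.mul_nonsing_inv _ hQ.det_pos.ne'.isUnit,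
      Matrix.one_mulVec]
  have h1 : x ⬝ᵥ y = u ⬝ᵥ Q.mulVec y := by
    conv_lhs => rw [← hu]
    rw [dotProduct_comm, herm_dot_symm hQ.1 y u]
  have h2 : u ⬝ᵥ Q.mulVec u = x ⬝ᵥ Q⁻¹.mulVec x := by
    rw [hu, dotProduct_comm]
  have step := psd_cs hQ.posSemidef u y
  calc x ⬝ᵥ y ≤ |x ⬝ᵥ y| := le_abs_self _
    _ = Real.sqrt ((x ⬝ᵥ y) ^ 2) := (Real.sqrt_sq_eq_abs _).symm
    _ ≤ Real.sqrt ((x ⬝ᵥ Q⁻¹.mulVec x) * (y ⬝ᵥ Q.mulVec y)) := by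
        apply Real.sqrt_le_sqrt
        rw [h1, ← h2]
        exact step
    _ = matNorm Q⁻¹ x * matNorm Q y := by
        rw [matNorm, matNorm, ← Real.sqrt_mul (psd_quad_nonneg hQ.inv.posSemidef x)]

lemma dot_sum_smul_vecMulVec {ι κ : Type*} [Fintype ι] [Fintype κ] (c : κ → ℝ)
    (x : κ → ι → ℝ) (u : ι → ℝ) :
    u ⬝ᵥ ((∑ p, c p • vecMulVec (x p) (x p) : Matrix ι ι ℝ)).mulVec u = ∑ p, c p * (x p ⬝ᵥ u) ^ 2 := by
  simp only [mulVec, dotProduct, Matrix.sum_apply, Matrix.smul_apply, vecMulVec_apply,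
    smul_eq_mul, Finset.sum_mul, Finset.mul_sum]
  have h1 : ∀ a : ι, (∑ b : ι, ∑ p : κ, u a * (c p * (x p a * x p b) * u b))
      = ∑ p : κ, ∑ b : ι, u a * (c p * (x p a * x p b) * u b) := fun a => Finset.sum_comm
  simp only [h1]
  rw [Finset.sum_comm]
  refine Finset.sum_congr rfl fun p _ => ?_
  rw [pow_two, Finset.sum_mul_sum, Finset.mul_sum]
  refine Finset.sum_congr rfl fun a _ => ?_
  rw [Finset.mul_sum]
  refine Finset.sum_congr rfl fun b _ => ?_
  ring

lemma fintype_prod_split {α : Type*} [Fintype α] (t : Finset α)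
    [F1 : Fintype {x // x ∈ t}] [F2 : Fintype {x // ¬ x ∈ t}] (f : α → ℝ) :
    (∏ i : { x // x ∈ t }, f i.1) * ∏ i : { x // ¬ x ∈ t }, f i.1 = ∏ i, f i := by
  classical
  rw [← Fintype.prod_subtype_mul_prod_subtype (fun x => x ∈ t) f]
  congr 1
  · refine Finset.prod_congr ?_ fun _ _ => rfl
    congr 1
    exact Subsingleton.elim _ _
  · refine Finset.prod_congr ?_ fun _ _ => rfl
    congr 1
    exact Subsingleton.elim _ _

/-- One-step back inequality for low-rank factored Markov games. -/
theorem one_step_back_factored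
    {M : ℕ} (hM : 1 ≤ M)
    (S : Fin M → Type*) [∀ j, Fintype (S j)] [∀ j, Nonempty (S j)]
    (A : Fin M → Type*) [∀ j, Fintype (A j)] [∀ j, Nonempty (A j)]
    {d n : ℕ} (hd : 1 ≤ d) (hn : 1 ≤ n)
    {lam B : ℝ} (hlam : 0 < lam) (hB : 0 < B)
    (Z : Fin M → Finset (Fin M))
    (φ : (j : Fin M) → ((k : {k // k ∈ Z j}) → S k.1) → A j → Fin d → ℝ)
    (hφ : ∀ j zs a, l2norm (φ j zs a) ≤ 1)
    (w : (j : Fin M) → S j → Fin d → ℝ)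
    (Ploc : (j : Fin M) → ((k : {k // k ∈ Z j}) → S k.1) → A j → S j → ℝ)
    (hPloc : ∀ j zs a s', Ploc j zs a s' = ∑ m, φ j zs a m * w j s' m)
    (hPlocpos : ∀ j zs a s', 0 ≤ Ploc j zs a s')
    (hPlocsum : ∀ j zs a, ∑ s', Ploc j zs a s' = 1)
    (P : (((j : Fin M) → S j) × ((j : Fin M) → A j)) → ((j : Fin M) → S j) → ℝ)
    (hP : ∀ p s', P p s' = ∏ j, Ploc j (fun k => p.1 k.1) (p.2 j) (s' j))
    (i : Fin M)
    (hw : ∀ G : ((k : {k // k ∈ Z i}) → S k.1) → ℝ,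
      (∀ z, G z ∈ Set.Icc (0 : ℝ) 1) →
      l2norm (fun k : ({j // j ∈ Z i} → Fin d) =>
        ∑ z : (j : {j // j ∈ Z i}) → S j.1,
          (∏ j : {j // j ∈ Z i}, w j.1 (z j) (k j)) * G z) ≤
        Real.sqrt ((d : ℝ) ^ (Z i).card))
    (φbar : (((j : Fin M) → S j) × ((j : Fin M) → A j)) → ({j // j ∈ Z i} → Fin d) → ℝ)
    (hφbar : ∀ p k, φbar p k = ∏ j : {j // j ∈ Z i},
      φ j.1 (fun k' => p.1 k'.1) (p.2 j.1) (k j))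
    (μ : (((j : Fin M) → S j) × ((j : Fin M) → A j)) → ℝ)
    (hμpos : ∀ p, 0 ≤ μ p) (hμsum : ∑ p, μ p = 1)
    (Sigb : Matrix ({j // j ∈ Z i} → Fin d) ({j // j ∈ Z i} → Fin d) ℝ)
    (hSigb : Sigb = (n : ℝ) • (∑ p, μ p • vecMulVec (φbar p) (φbar p)) +
      lam • (1 : Matrix ({j // j ∈ Z i} → Fin d) ({j // j ∈ Z i} → Fin d) ℝ))
    (ν : (((j : Fin M) → S j) × ((j : Fin M) → A j)) → ℝ)
    (hν : ∀ p, ν p = (1 / (Fintype.card ((j : Fin M) → A j) : ℝ)) * ∑ p', μ p' * P p' p.1)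
    (q' : (((j : Fin M) → S j) × ((j : Fin M) → A j)) → ℝ)
    (hq'pos : ∀ p, 0 ≤ q' p) (hq'sum : ∑ p, q' p = 1)
    (pol : ((j : Fin M) → S j) → ((j : Fin M) → A j) → ℝ)
    (hpolpos : ∀ s a, 0 ≤ pol s a) (hpolsum : ∀ s, ∑ a, pol s a = 1)
    (q : (((j : Fin M) → S j) × ((j : Fin M) → A j)) → ℝ)
    (hq : ∀ p, q p = ∑ p', q' p' * P p' p.1 * pol p.1 p.2)
    (g : (((k : {k // k ∈ Z i}) → S k.1) × A i) → ℝ)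
    (hg : ∀ x, g x ∈ Set.Icc (0 : ℝ) B) :
    (∑ p, q p * g (fun k => p.1 k.1, p.2 i)) ≤
      (Fintype.card (A i) : ℝ) *
        (∑ p, q' p * matNorm Sigb⁻¹ (φbar p)) *
          Real.sqrt ((n : ℝ) * (∑ p, ν p * g (fun k => p.1 k.1, p.2 i) ^ 2)
            + B ^ 2 * lam * (d : ℝ) ^ (Z i).card) := by
  classical
  have hPpos : ∀ p s', 0 ≤ P p s' := by
    intro p s'; rw [hP]; exact Finset.prod_nonneg fun j _ => hPlocpos _ _ _ _
  have hPsum : ∀ p, ∑ s', P p s' = 1 := by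
    intro p
    simp_rw [hP]
    rw [sum_prod_pi (fun j => S j) (fun j x => Ploc j (fun k => p.1 k.1) (p.2 j) x)]
    exact Finset.prod_eq_one fun j _ => hPlocsum _ _ _
  set Wb : A i → ({j // j ∈ Z i} → Fin d) → ℝ :=
    fun b k => ∑ z : (j : {j // j ∈ Z i}) → S j.1,
      (∏ j : {j // j ∈ Z i}, w j.1 (z j) (k j)) * g (z, b) with hWb
  -- factorization lemma
  have hfact : ∀ (p : ((j : Fin M) → S j) × ((j : Fin M) → A j))
      (h : ((k : {k // k ∈ Z i}) → S k.1) → ℝ),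
      ∑ s', P p s' * h (fun k => s' k.1)
        = ∑ k : {j // j ∈ Z i} → Fin d, φbar p k *
            ∑ z : (j : {j // j ∈ Z i}) → S j.1,
              (∏ j : {j // j ∈ Z i}, w j.1 (z j) (k j)) * h z := by
    intro p h
    have step1 : ∑ s', P p s' * h (fun k => s' k.1)
        = ∑ z : (j : {j // j ∈ Z i}) → S j.1,
            ((∏ j : {j // j ∈ Z i}, Ploc j.1 (fun k => p.1 k.1) (p.2 j.1) (z j)) * h z)
          * ∑ y : (j : {j // ¬ j ∈ Z i}) → S j.1,
              ∏ j : {j // ¬ j ∈ Z i}, Ploc j.1 (fun k => p.1 k.1) (p.2 j.1) (y j) := by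
      rw [← Equiv.sum_comp (Equiv.piEquivPiSubtypeProd (fun j => j ∈ Z i) S).symm
        (fun s' => P p s' * h (fun k => s' k.1))]
      rw [Fintype.sum_prod_type]
      refine Finset.sum_congr rfl fun z _ => ?_
      rw [Finset.mul_sum]
      refine Finset.sum_congr rfl fun y _ => ?_
      have hcomp : ∀ k : {k // k ∈ Z i},
          (Equiv.piEquivPiSubtypeProd (fun j => j ∈ Z i) S).symm (z, y) k.1 = z k := by
        intro k
        simp [Equiv.piEquivPiSubtypeProd_symm_apply, k.2]
      have hh : h (fun k => (Equiv.piEquivPiSubtypeProd (fun j => j ∈ Z i) S).symm (z, y) k.1)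
          = h z := by
        congr 1; funext k; exact hcomp k
      rw [hP]
      rw [← fintype_prod_split (Z i)
        (fun j => Ploc j (fun k => p.1 k.1) (p.2 j)
          ((Equiv.piEquivPiSubtypeProd (fun j => j ∈ Z i) S).symm (z, y) j))]
      have e1 : ∀ j : {j // j ∈ Z i},
          Ploc j.1 (fun k => p.1 k.1) (p.2 j.1)
            ((Equiv.piEquivPiSubtypeProd (fun j => j ∈ Z i) S).symm (z, y) j.1)
          = Ploc j.1 (fun k => p.1 k.1) (p.2 j.1) (z j) := by
        intro j; rw [hcomp j]
      have e2 : ∀ j : {j // ¬ j ∈ Z i},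
          Ploc j.1 (fun k => p.1 k.1) (p.2 j.1)
            ((Equiv.piEquivPiSubtypeProd (fun j => j ∈ Z i) S).symm (z, y) j.1)
          = Ploc j.1 (fun k => p.1 k.1) (p.2 j.1) (y j) := by
        intro j
        congr 1
        simp [Equiv.piEquivPiSubtypeProd_symm_apply, j.2]
      rw [Finset.prod_congr rfl fun j _ => e1 j, Finset.prod_congr rfl fun j _ => e2 j, hh]
      ring
    have step2 : (∑ y : (j : {j // ¬ j ∈ Z i}) → S j.1,
        ∏ j : {j // ¬ j ∈ Z i}, Ploc j.1 (fun k => p.1 k.1) (p.2 j.1) (y j)) = 1 := by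
      rw [sum_prod_pi (fun j : {j // ¬ j ∈ Z i} => S j.1)
        (fun j x => Ploc j.1 (fun k => p.1 k.1) (p.2 j.1) x)]
      exact Finset.prod_eq_one fun j _ => hPlocsum _ _ _
    rw [step1]
    simp only [step2, mul_one]
    have hexp : ∀ z : (j : {j // j ∈ Z i}) → S j.1,
        (∏ j : {j // j ∈ Z i}, Ploc j.1 (fun k => p.1 k.1) (p.2 j.1) (z j))
        = ∑ k : {j // j ∈ Z i} → Fin d,
            (∏ j : {j // j ∈ Z i}, φ j.1 (fun k' => p.1 k'.1) (p.2 j.1) (k j)) *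
            ∏ j : {j // j ∈ Z i}, w j.1 (z j) (k j) := by
      intro z
      have e : ∀ j : {j // j ∈ Z i}, Ploc j.1 (fun k => p.1 k.1) (p.2 j.1) (z j)
          = ∑ m, φ j.1 (fun k => p.1 k.1) (p.2 j.1) m * w j.1 (z j) m :=
        fun j => hPloc _ _ _ _
      rw [Finset.prod_congr rfl fun j _ => e j]
      rw [← sum_prod_pi (fun _ : {j // j ∈ Z i} => Fin d)
        (fun j m => φ j.1 (fun k => p.1 k.1) (p.2 j.1) m * w j.1 (z j) m)]
      exact Finset.sum_congr rfl fun k _ => Finset.prod_mul_distrib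
    simp_rw [hexp]
    simp only [Finset.sum_mul]
    rw [Finset.sum_comm]
    refine Finset.sum_congr rfl fun k _ => ?_
    rw [hφbar, Finset.mul_sum]
    refine Finset.sum_congr rfl fun z _ => ?_
    ring
  have hdot : ∀ p b, φbar p ⬝ᵥ Wb b = ∑ s', P p s' * g (fun k => s' k.1, b) := by
    intro p b
    simp only [dotProduct, hWb]
    exact (hfact p (fun z => g (z, b))).symm
  have hJ : ∀ p b, (φbar p ⬝ᵥ Wb b) ^ 2 ≤ ∑ s', P p s' * g (fun k => s' k.1, b) ^ 2 := by
    intro p b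
    rw [hdot p b]
    have hcs := Finset.sum_mul_sq_le_sq_mul_sq Finset.univ (fun s' => Real.sqrt (P p s'))
      (fun s' => Real.sqrt (P p s') * g (fun k => s' k.1, b))
    have e1 : ∀ s' : (j : Fin M) → S j,
        Real.sqrt (P p s') * (Real.sqrt (P p s') * g (fun k => s' k.1, b))
        = P p s' * g (fun k => s' k.1, b) := by
      intro s'; rw [← mul_assoc, Real.mul_self_sqrt (hPpos p s')]
    have e2 : ∀ s' : (j : Fin M) → S j, Real.sqrt (P p s') ^ 2 = P p s' :=
      fun s' => Real.sq_sqrt (hPpos p s')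
    have e3 : ∀ s' : (j : Fin M) → S j,
        (Real.sqrt (P p s') * g (fun k => s' k.1, b)) ^ 2
        = P p s' * g (fun k => s' k.1, b) ^ 2 := by
      intro s'; rw [mul_pow, e2]
    calc (∑ s', P p s' * g (fun k => s' k.1, b)) ^ 2
        = (∑ s', Real.sqrt (P p s') * (Real.sqrt (P p s') * g (fun k => s' k.1, b))) ^ 2 := by
          simp_rw [e1]
      _ ≤ (∑ s', Real.sqrt (P p s') ^ 2) *
            ∑ s', (Real.sqrt (P p s') * g (fun k => s' k.1, b)) ^ 2 := hcs
      _ = (∑ s', P p s') * ∑ s', P p s' * g (fun k => s' k.1, b) ^ 2 := by simp_rw [e2, e3]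
      _ = ∑ s', P p s' * g (fun k => s' k.1, b) ^ 2 := by rw [hPsum p, one_mul]
  have hquad : ∀ u : ({j // j ∈ Z i} → Fin d) → ℝ,
      u ⬝ᵥ Sigb.mulVec u = n * (∑ p, μ p * (φbar p ⬝ᵥ u) ^ 2) + lam * (u ⬝ᵥ u) := by
    intro u
    rw [hSigb, Matrix.add_mulVec, dotProduct_add, Matrix.smul_mulVec,
      Matrix.smul_mulVec, dotProduct_smul, dotProduct_smul, Matrix.one_mulVec,
      smul_eq_mul, smul_eq_mul, dot_sum_smul_vecMulVec]
  have hSigbPD : Sigb.PosDef := by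
    refine Matrix.PosDef.of_dotProduct_mulVec_pos ?_ ?_
    · show Sigbᴴ = Sigb
      rw [hSigb]
      ext a b
      simp only [Matrix.conjTranspose_apply, Matrix.add_apply, Matrix.smul_apply,
        Matrix.sum_apply, vecMulVec_apply, Matrix.one_apply, smul_eq_mul, star_trivial]
      have hsum : (∑ x, μ x * (φbar x b * φbar x a)) = ∑ x, μ x * (φbar x a * φbar x b) :=
        Finset.sum_congr rfl fun x _ => by ring
      rw [hsum]
      by_cases hab : a = b
      · subst hab; rfl
      · rw [if_neg (fun hba : b = a => hab hba.symm), if_neg hab]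
    · intro x hx
      have hst : star x = x := by funext k; exact star_trivial _
      rw [hst, hquad x]
      have h2 : 0 < x ⬝ᵥ x := by
        have := dotProduct_star_self_pos_iff (v := x) (R := ℝ)
        rw [hst] at this
        exact this.mpr hx
      have h1 : 0 ≤ (n : ℝ) * (∑ p, μ p * (φbar p ⬝ᵥ x) ^ 2) :=
        mul_nonneg (Nat.cast_nonneg n)
          (Finset.sum_nonneg fun p _ => mul_nonneg (hμpos p) (sq_nonneg _))
      exact add_pos_of_nonneg_of_pos h1 (mul_pos hlam h2)
  have hWnormsq : ∀ b, Wb b ⬝ᵥ Wb b ≤ B ^ 2 * (d : ℝ) ^ (Z i).card := by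
    intro b
    have hGIcc : ∀ z, g (z, b) / B ∈ Set.Icc (0 : ℝ) 1 :=
      fun z => ⟨div_nonneg (hg _).1 hB.le, (div_le_one hB).2 (hg _).2⟩
    have h2 : ∀ k, Wb b k = B * ∑ z : (j : {j // j ∈ Z i}) → S j.1,
        (∏ j : {j // j ∈ Z i}, w j.1 (z j) (k j)) * (g (z, b) / B) := by
      intro k
      simp only [hWb]
      rw [Finset.mul_sum]
      refine Finset.sum_congr rfl fun z _ => ?_
      field_simp
    have h3 : Wb b ⬝ᵥ Wb b = B ^ 2 * ∑ k : {j // j ∈ Z i} → Fin d,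
        (∑ z : (j : {j // j ∈ Z i}) → S j.1,
          (∏ j : {j // j ∈ Z i}, w j.1 (z j) (k j)) * (g (z, b) / B)) ^ 2 := by
      simp only [dotProduct]
      rw [Finset.mul_sum]
      refine Finset.sum_congr rfl fun k _ => ?_
      rw [h2 k]; ring
    have hs : 0 ≤ ∑ k : {j // j ∈ Z i} → Fin d,
        (∑ z : (j : {j // j ∈ Z i}) → S j.1,
          (∏ j : {j // j ∈ Z i}, w j.1 (z j) (k j)) * (g (z, b) / B)) ^ 2 :=
      Finset.sum_nonneg fun k _ => sq_nonneg _
    have hle := hw (fun z => g (z, b) / B) hGIcc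
    rw [l2norm] at hle
    have h4 : ∑ k : {j // j ∈ Z i} → Fin d,
        (∑ z : (j : {j // j ∈ Z i}) → S j.1,
          (∏ j : {j // j ∈ Z i}, w j.1 (z j) (k j)) * (g (z, b) / B)) ^ 2
        ≤ (d : ℝ) ^ (Z i).card := by
      calc _ = Real.sqrt (∑ k : {j // j ∈ Z i} → Fin d,
            (∑ z : (j : {j // j ∈ Z i}) → S j.1,
              (∏ j : {j // j ∈ Z i}, w j.1 (z j) (k j)) * (g (z, b) / B)) ^ 2) ^ 2 :=
            (Real.sq_sqrt hs).symm
        _ ≤ Real.sqrt ((d : ℝ) ^ (Z i).card) ^ 2 :=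
            pow_le_pow_left₀ (Real.sqrt_nonneg _) hle 2
        _ = (d : ℝ) ^ (Z i).card := Real.sq_sqrt (by positivity)
    rw [h3]
    exact mul_le_mul_of_nonneg_left h4 (by positivity)
  -- cardinality bookkeeping
  have hsplit : ∀ F : A i → ℝ, ∑ a : (j : Fin M) → A j, F (a i)
      = (Fintype.card ((j : {j // j ≠ i}) → A j.1) : ℝ) * ∑ b, F b := by
    intro F
    rw [← Equiv.sum_comp (Equiv.piSplitAt i A).symm (fun a => F (a i))]
    have e : ∀ xy : A i × ((j : {j // j ≠ i}) → A j.1),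
        (Equiv.piSplitAt i A).symm xy i = xy.1 := by
      intro xy; simp [Equiv.piSplitAt_symm_apply]
    simp only [Function.comp, e]
    rw [Fintype.sum_prod_type]
    simp only [Finset.sum_const, Finset.card_univ, nsmul_eq_mul]
    rw [← Finset.mul_sum]
  have hcard : (Fintype.card ((j : Fin M) → A j) : ℝ)
      = (Fintype.card (A i) : ℝ) * (Fintype.card ((j : {j // j ≠ i}) → A j.1) : ℝ) := by
    rw [Fintype.card_congr (Equiv.piSplitAt i A), Fintype.card_prod]
    push_cast; ring
  have hcAtpos : (0 : ℝ) < (Fintype.card ((j : Fin M) → A j) : ℝ) := by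
    exact_mod_cast Fintype.card_pos
  have hE : (∑ b : A i, ∑ p, μ p * (∑ s', P p s' * g (fun k => s' k.1, b) ^ 2))
      = (Fintype.card (A i) : ℝ) * ∑ p, ν p * g (fun k => p.1 k.1, p.2 i) ^ 2 := by
    have hL : (∑ b : A i, ∑ p, μ p * (∑ s', P p s' * g (fun k => s' k.1, b) ^ 2))
        = ∑ b : A i, ∑ s' : (j : Fin M) → S j,
            (∑ p', μ p' * P p' s') * g (fun k => s' k.1, b) ^ 2 := by
      refine Finset.sum_congr rfl fun b _ => ?_
      simp_rw [Finset.mul_sum]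
      rw [Finset.sum_comm]
      refine Finset.sum_congr rfl fun s' _ => ?_
      rw [Finset.sum_mul]
      refine Finset.sum_congr rfl fun p _ => ?_
      ring
    have hR : (Fintype.card (A i) : ℝ) * ∑ p, ν p * g (fun k => p.1 k.1, p.2 i) ^ 2
        = ∑ b : A i, ∑ s' : (j : Fin M) → S j,
            (∑ p', μ p' * P p' s') * g (fun k => s' k.1, b) ^ 2 := by
      have hone : (Fintype.card (A i) : ℝ) *
          ((Fintype.card ((j : {j // j ≠ i}) → A j.1) : ℝ) *
            (1 / (Fintype.card ((j : Fin M) → A j) : ℝ))) = 1 := by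
        rw [hcard]
        field_simp
      calc (Fintype.card (A i) : ℝ) * ∑ p, ν p * g (fun k => p.1 k.1, p.2 i) ^ 2
          = (Fintype.card (A i) : ℝ) * ∑ s : (j : Fin M) → S j, ∑ a : (j : Fin M) → A j,
              ((1 / (Fintype.card ((j : Fin M) → A j) : ℝ)) * ∑ p', μ p' * P p' s)
                * g (fun k => s k.1, a i) ^ 2 := by
            rw [Fintype.sum_prod_type]
            refine congrArg _ (Finset.sum_congr rfl fun s _ => Finset.sum_congr rfl fun a _ => ?_)
            rw [hν (s, a)]
        _ = (Fintype.card (A i) : ℝ) * ∑ s : (j : Fin M) → S j,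
              ((Fintype.card ((j : {j // j ≠ i}) → A j.1) : ℝ) * ∑ b : A i,
                ((1 / (Fintype.card ((j : Fin M) → A j) : ℝ)) * ∑ p', μ p' * P p' s)
                  * g (fun k => s k.1, b) ^ 2) := by
            refine congrArg _ (Finset.sum_congr rfl fun s _ => ?_)
            exact hsplit (fun b => ((1 / (Fintype.card ((j : Fin M) → A j) : ℝ))
              * ∑ p', μ p' * P p' s) * g (fun k => s k.1, b) ^ 2)
        _ = ∑ s : (j : Fin M) → S j, ∑ b : A i,
              (∑ p', μ p' * P p' s) * g (fun k => s k.1, b) ^ 2 := by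
            rw [Finset.mul_sum]
            refine Finset.sum_congr rfl fun s _ => ?_
            rw [Finset.mul_sum, Finset.mul_sum]
            refine Finset.sum_congr rfl fun b _ => ?_
            linear_combination ((∑ p', μ p' * P p' s) * g (fun k => s k.1, b) ^ 2) * hone
        _ = ∑ b : A i, ∑ s' : (j : Fin M) → S j,
              (∑ p', μ p' * P p' s') * g (fun k => s' k.1, b) ^ 2 := Finset.sum_comm
    rw [hL, hR]
  have hνEnn : 0 ≤ ∑ p, ν p * g (fun k => p.1 k.1, p.2 i) ^ 2 :=
    Finset.sum_nonneg fun p _ => mul_nonneg (by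
      rw [hν]
      exact mul_nonneg (by positivity)
        (Finset.sum_nonneg fun p' _ => mul_nonneg (hμpos p') (hPpos p' p.1))) (sq_nonneg _)
  have hpol : ∀ s : (j : Fin M) → S j,
      (∑ a : (j : Fin M) → A j, pol s a * g (fun k => s k.1, a i))
        ≤ ∑ b : A i, g (fun k => s k.1, b) := by
    intro s
    have e : ∀ xy : A i × ((j : {j // j ≠ i}) → A j.1),
        (Equiv.piSplitAt i A).symm xy i = xy.1 := by
      intro xy; simp [Equiv.piSplitAt_symm_apply]
    rw [← Equiv.sum_comp (Equiv.piSplitAt i A).symm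
      (fun a => pol s a * g (fun k => s k.1, a i))]
    rw [Fintype.sum_prod_type]
    refine Finset.sum_le_sum fun b _ => ?_
    have e2 : ∀ y : (j : {j // j ≠ i}) → A j.1, (Equiv.piSplitAt i A).symm (b, y) i = b :=
      fun y => e (b, y)
    calc ∑ y : (j : {j // j ≠ i}) → A j.1,
          pol s ((Equiv.piSplitAt i A).symm (b, y))
            * g (fun k => s k.1, (Equiv.piSplitAt i A).symm (b, y) i)
        = (∑ y : (j : {j // j ≠ i}) → A j.1, pol s ((Equiv.piSplitAt i A).symm (b, y)))
            * g (fun k => s k.1, b) := by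
          rw [Finset.sum_mul]
          refine Finset.sum_congr rfl fun y _ => ?_
          rw [e2 y]
      _ ≤ 1 * g (fun k => s k.1, b) := by
          refine mul_le_mul_of_nonneg_right ?_ (hg _).1
          rw [← hpolsum s]
          rw [← Equiv.sum_comp (Equiv.piSplitAt i A).symm (fun a => pol s a)]
          rw [Fintype.sum_prod_type]
          exact Finset.single_le_sum
            (f := fun x => ∑ y : (j : {j // j ≠ i}) → A j.1,
              pol s ((Equiv.piSplitAt i A).symm (x, y)))
            (fun x _ => Finset.sum_nonneg fun y _ => hpolpos _ _) (Finset.mem_univ b)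
      _ = g (fun k => s k.1, b) := one_mul _
  have hLHS : (∑ p, q p * g (fun k => p.1 k.1, p.2 i))
      = ∑ p', q' p' * ∑ s : (j : Fin M) → S j, P p' s *
          ∑ a : (j : Fin M) → A j, pol s a * g (fun k => s k.1, a i) := by
    rw [Fintype.sum_prod_type]
    calc ∑ s : (j : Fin M) → S j, ∑ a : (j : Fin M) → A j, q (s, a) * g (fun k => s k.1, a i)
        = ∑ s : (j : Fin M) → S j, ∑ a : (j : Fin M) → A j,
            ∑ p', q' p' * P p' s * pol s a * g (fun k => s k.1, a i) := by
          refine Finset.sum_congr rfl fun s _ => Finset.sum_congr rfl fun a _ => ?_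
          rw [hq (s, a), Finset.sum_mul]
      _ = ∑ p', ∑ s : (j : Fin M) → S j, ∑ a : (j : Fin M) → A j,
            q' p' * P p' s * pol s a * g (fun k => s k.1, a i) := by
          have h1 : ∀ s : (j : Fin M) → S j,
              (∑ a : (j : Fin M) → A j,
                  ∑ p', q' p' * P p' s * pol s a * g (fun k => s k.1, a i))
              = ∑ p', ∑ a : (j : Fin M) → A j,
                  q' p' * P p' s * pol s a * g (fun k => s k.1, a i) :=
            fun s => Finset.sum_comm
          simp_rw [h1]
          exact Finset.sum_comm
      _ = ∑ p', q' p' * ∑ s : (j : Fin M) → S j, P p' s *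
            ∑ a : (j : Fin M) → A j, pol s a * g (fun k => s k.1, a i) := by
          refine Finset.sum_congr rfl fun p' _ => ?_
          rw [Finset.mul_sum]
          refine Finset.sum_congr rfl fun s _ => ?_
          rw [Finset.mul_sum, Finset.mul_sum]
          refine Finset.sum_congr rfl fun a _ => ?_
          ring
  have hper : ∀ p', (∑ s : (j : Fin M) → S j, P p' s *
      ∑ a : (j : Fin M) → A j, pol s a * g (fun k => s k.1, a i))
      ≤ matNorm Sigb⁻¹ (φbar p') * ∑ b : A i, matNorm Sigb (Wb b) := by
    intro p'
    calc (∑ s : (j : Fin M) → S j, P p' s *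
          ∑ a : (j : Fin M) → A j, pol s a * g (fun k => s k.1, a i))
        ≤ ∑ s : (j : Fin M) → S j, P p' s * ∑ b : A i, g (fun k => s k.1, b) :=
          Finset.sum_le_sum fun s _ => mul_le_mul_of_nonneg_left (hpol s) (hPpos p' s)
      _ = ∑ b : A i, (φbar p' ⬝ᵥ Wb b) := by
          simp_rw [Finset.mul_sum]
          rw [Finset.sum_comm]
          exact Finset.sum_congr rfl fun b _ => (hdot p' b).symm
      _ ≤ ∑ b : A i, matNorm Sigb⁻¹ (φbar p') * matNorm Sigb (Wb b) :=
          Finset.sum_le_sum fun b _ => matNorm_cs hSigbPD (φbar p') (Wb b)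
      _ = matNorm Sigb⁻¹ (φbar p') * ∑ b : A i, matNorm Sigb (Wb b) := by
          rw [Finset.mul_sum]
  set C := Real.sqrt ((n : ℝ) * (∑ p, ν p * g (fun k => p.1 k.1, p.2 i) ^ 2)
      + B ^ 2 * lam * (d : ℝ) ^ (Z i).card) with hC
  have hTsum : (∑ b : A i, matNorm Sigb (Wb b)) ≤ (Fintype.card (A i) : ℝ) * C := by
    have hqf : ∀ b, matNorm Sigb (Wb b) ^ 2 = Wb b ⬝ᵥ Sigb.mulVec (Wb b) :=
      fun b => Real.sq_sqrt (psd_quad_nonneg hSigbPD.posSemidef (Wb b))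
    have h2 : (∑ b : A i, matNorm Sigb (Wb b) ^ 2)
        ≤ (Fintype.card (A i) : ℝ) * ((n : ℝ) * (∑ p, ν p * g (fun k => p.1 k.1, p.2 i) ^ 2)
            + B ^ 2 * lam * (d : ℝ) ^ (Z i).card) := by
      have hb : ∀ b : A i, matNorm Sigb (Wb b) ^ 2
          ≤ (n : ℝ) * (∑ p, μ p * (∑ s', P p s' * g (fun k => s' k.1, b) ^ 2))
            + lam * (B ^ 2 * (d : ℝ) ^ (Z i).card) := by
        intro b
        rw [hqf b, hquad (Wb b)]
        refine add_le_add ?_ ?_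
        · refine mul_le_mul_of_nonneg_left ?_ (Nat.cast_nonneg n)
          exact Finset.sum_le_sum fun p _ => mul_le_mul_of_nonneg_left (hJ p b) (hμpos p)
        · exact mul_le_mul_of_nonneg_left (hWnormsq b) hlam.le
      calc ∑ b : A i, matNorm Sigb (Wb b) ^ 2
          ≤ ∑ b : A i, ((n : ℝ) * (∑ p, μ p * (∑ s', P p s' * g (fun k => s' k.1, b) ^ 2))
              + lam * (B ^ 2 * (d : ℝ) ^ (Z i).card)) := Finset.sum_le_sum fun b _ => hb b
        _ = (n : ℝ) * (∑ b : A i, ∑ p, μ p * (∑ s', P p s' * g (fun k => s' k.1, b) ^ 2))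
            + (Fintype.card (A i) : ℝ) * (lam * (B ^ 2 * (d : ℝ) ^ (Z i).card)) := by
            rw [Finset.sum_add_distrib, Finset.sum_const, Finset.card_univ, nsmul_eq_mul,
              ← Finset.mul_sum]
        _ = (n : ℝ) * ((Fintype.card (A i) : ℝ)
              * ∑ p, ν p * g (fun k => p.1 k.1, p.2 i) ^ 2)
            + (Fintype.card (A i) : ℝ) * (lam * (B ^ 2 * (d : ℝ) ^ (Z i).card)) := by
            rw [hE]
        _ = (Fintype.card (A i) : ℝ) *
              ((n : ℝ) * (∑ p, ν p * g (fun k => p.1 k.1, p.2 i) ^ 2)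
                + B ^ 2 * lam * (d : ℝ) ^ (Z i).card) := by ring
    have h1 : (∑ b : A i, matNorm Sigb (Wb b)) ^ 2
        ≤ (Fintype.card (A i) : ℝ) * ∑ b : A i, matNorm Sigb (Wb b) ^ 2 := by
      have := Finset.sum_mul_sq_le_sq_mul_sq Finset.univ (fun _ : A i => (1 : ℝ))
        (fun b => matNorm Sigb (Wb b))
      simpa using this
    have hTnn : 0 ≤ ∑ b : A i, matNorm Sigb (Wb b) :=
      Finset.sum_nonneg fun b _ => Real.sqrt_nonneg _
    calc ∑ b : A i, matNorm Sigb (Wb b)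
        = Real.sqrt ((∑ b : A i, matNorm Sigb (Wb b)) ^ 2) := (Real.sqrt_sq hTnn).symm
      _ ≤ Real.sqrt ((Fintype.card (A i) : ℝ) * ((Fintype.card (A i) : ℝ) *
            ((n : ℝ) * (∑ p, ν p * g (fun k => p.1 k.1, p.2 i) ^ 2)
              + B ^ 2 * lam * (d : ℝ) ^ (Z i).card))) := by
          apply Real.sqrt_le_sqrt
          exact h1.trans (mul_le_mul_of_nonneg_left h2 (Nat.cast_nonneg _))
      _ = (Fintype.card (A i) : ℝ) * C := by
          rw [hC, ← mul_assoc, Real.sqrt_mul (mul_self_nonneg _),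
            Real.sqrt_mul_self (Nat.cast_nonneg _)]
  have hΦnn : 0 ≤ ∑ p, q' p * matNorm Sigb⁻¹ (φbar p) :=
    Finset.sum_nonneg fun p _ => mul_nonneg (hq'pos p) (Real.sqrt_nonneg _)
  calc (∑ p, q p * g (fun k => p.1 k.1, p.2 i))
      = ∑ p', q' p' * ∑ s : (j : Fin M) → S j, P p' s *
          ∑ a : (j : Fin M) → A j, pol s a * g (fun k => s k.1, a i) := hLHS
    _ ≤ ∑ p', q' p' * (matNorm Sigb⁻¹ (φbar p') * ∑ b : A i, matNorm Sigb (Wb b)) :=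
        Finset.sum_le_sum fun p' _ => mul_le_mul_of_nonneg_left (hper p') (hq'pos p')
    _ = (∑ p', q' p' * matNorm Sigb⁻¹ (φbar p')) * ∑ b : A i, matNorm Sigb (Wb b) := by
        rw [Finset.sum_mul]
        exact Finset.sum_congr rfl fun p' _ => by ring
    _ ≤ (∑ p', q' p' * matNorm Sigb⁻¹ (φbar p')) * ((Fintype.card (A i) : ℝ) * C) :=
        mul_le_mul_of_nonneg_left hTsum hΦnn
    _ = (Fintype.card (A i) : ℝ) * (∑ p, q' p * matNorm Sigb⁻¹ (φbar p)) * C := by ring
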